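/- Let e ≥ 2 and a,b ∈ ℕ with 1 ≤ a ≤ q-1 and 0 ≤ b - ea ≤ q-1. Then the minimum distance d^⊥ of the dual of C_e(a,b) = Σ_{d=0}^{a} span{(0^{a-d}, α_1^d,…,α_q^d)} ⊗ PRS_q(b - ed + 1) ⊆ F_q^{(q+1)^2} satisfies min{a, b-ea} + 2 ≤ d^⊥ ≤ min{a, b} + 2. -/

import Mathlib

noncomputable def dualCode (F : Type*) [Field F] {ι : Type*} [Fintype ι]
    (C : Submodule F (ι → F)) : Submodule F (ι → F) where
  carrier := {x | ∀ c ∈ C, ∑ i, x i * c i = 0}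
  zero_mem' := by intro c _; simp
  add_mem' := by
    intro x y hx hy c hc
    simp only [Pi.add_apply, add_mul, Finset.sum_add_distrib]
    rw [hx c hc, hy c hc, add_zero]
  smul_mem' := by
    intro a x hx c hc
    simp only [Pi.smul_apply, smul_eq_mul, mul_assoc, ← Finset.mul_sum]
    rw [hx c hc, mul_zero]

noncomputable def minDist (F : Type*) [Field F] {ι : Type*} [Fintype ι] [DecidableEq F]
    (C : Submodule F (ι → F)) : ℕ :=
  sInf {w | ∃ c ∈ C, c ≠ 0 ∧ hammingNorm c = w}

/-- The weight of a matrix codeword: the number of nonzero entries. -/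
noncomputable def wt2 {F : Type*} [Zero F] [DecidableEq F] {ι₁ ι₂ : Type*} [Fintype ι₁]
    [Fintype ι₂] (m : ι₂ → ι₁ → F) : ℕ :=
  hammingNorm (fun p : ι₂ × ι₁ => m p.1 p.2)

noncomputable def minDist2 (F : Type*) [Field F] [DecidableEq F] {ι₁ ι₂ : Type*} [Fintype ι₁]
    [Fintype ι₂] (C : Submodule F (ι₂ → ι₁ → F)) : ℕ :=
  sInf {w | ∃ m ∈ C, m ≠ 0 ∧ wt2 m = w}

noncomputable def dualCode2 (F : Type*) [Field F] {ι₁ ι₂ : Type*} [Fintype ι₁] [Fintype ι₂]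
    (C : Submodule F (ι₂ → ι₁ → F)) : Submodule F (ι₂ → ι₁ → F) where
  carrier := {x | ∀ c ∈ C, ∑ i, ∑ j, x i j * c i j = 0}
  zero_mem' := by intro c _; simp
  add_mem' := by
    intro x y hx hy c hc
    simp only [Pi.add_apply, add_mul, Finset.sum_add_distrib]
    rw [hx c hc, hy c hc, add_zero]
  smul_mem' := by
    intro a x hx c hc
    simp only [Pi.smul_apply, smul_eq_mul, mul_assoc, ← Finset.mul_sum]
    rw [hx c hc, mul_zero]

/-- Evaluation points of the projective Reed–Solomon code: the point at infinity `(0,1)`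
(indexed by `none`) and the affine points `(1,α)` for `α ∈ F` (indexed by `some α`). -/
noncomputable def PRSpt (F : Type*) [Field F] (p : Option F) : Fin 2 → F :=
  Option.elim p ![(0 : F), 1] (fun α => ![1, α])

/-- The projective Reed–Solomon code `PRS_q(k)`: the image of the space of homogeneous
polynomials of degree `k - 1` in two variables under evaluation at the `q+1` points of
`ℙ¹(F)`.  By convention it is `{0}` for `k ≤ 0` (and it is the full space for `k ≥ q+1`). -/
noncomputable def PRS (F : Type*) [Field F] (k : ℤ) : Submodule F (Option F → F) :=
  if k ≤ 0 then ⊥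
  else (MvPolynomial.homogeneousSubmodule (Fin 2) F (k - 1).toNat).map
    (LinearMap.pi fun p : Option F => (MvPolynomial.aeval (PRSpt F p)).toLinearMap)

/-- The linear map `c ↦ v ⊗ c`, sending a word `c` to the matrix `(v i * c j)_{i,j}`. -/
noncomputable def vTensor (F : Type*) [Field F] {ι₁ ι₂ : Type*} (v : ι₁ → F) :
    (ι₂ → F) →ₗ[F] (ι₁ → ι₂ → F) where
  toFun c := fun i j => v i * c j
  map_add' c d := by funext i j; simp [mul_add]
  map_smul' a c := by funext i j; simp only [Pi.smul_apply, smul_eq_mul, RingHom.id_apply]; ring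

/-- The vector `(0^{a-d}, α₁^d, …, α_q^d) ∈ F^{q+1}` (with the convention `0^0 = 1`). -/
noncomputable def vproj (F : Type*) [Field F] (a d : ℕ) : Option F → F :=
  fun p => Option.elim p (if d = a then (1 : F) else 0) (fun α => α ^ d)

/-- The code `C_e(a,b) = Σ_{d=0}^{a} ⟨(0^{a-d}, α₁^d, …, α_q^d)⟩ ⊗ PRS_q(b - ed + 1)`
inside `F^{(q+1)²}`: the AG code on the Hirzebruch surface `H_e` parametrized by
`aS_e + bF_e`, evaluated at all `(q+1)²` rational points. -/
noncomputable def CE (F : Type*) [Field F] (e a b : ℕ) :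
    Submodule F (Option F → Option F → F) :=
  ⨆ d ∈ Finset.Iic a, (PRS F ((b : ℤ) - e * d + 1)).map (vTensor F (vproj F a d))

/-! ### Auxiliary lemmas -/

open Polynomial Finset

lemma mem_dualCode2 {F : Type*} [Field F] {ι₁ ι₂ : Type*} [Fintype ι₁] [Fintype ι₂]
    {C : Submodule F (ι₂ → ι₁ → F)} {x : ι₂ → ι₁ → F} :
    x ∈ dualCode2 F C ↔ ∀ c ∈ C, ∑ i, ∑ j, x i j * c i j = 0 := Iff.rfl

/-- The pairing with a fixed `x`, as a linear map. -/
noncomputable def pairL (F : Type*) [Field F] {ι₁ ι₂ : Type*} [Fintype ι₁] [Fintype ι₂]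
    (x : ι₂ → ι₁ → F) : (ι₂ → ι₁ → F) →ₗ[F] F where
  toFun m := ∑ i, ∑ j, x i j * m i j
  map_add' m n := by simp [mul_add, Finset.sum_add_distrib]
  map_smul' c m := by
    simp only [Pi.smul_apply, smul_eq_mul, RingHom.id_apply, Finset.mul_sum]
    refine Finset.sum_congr rfl fun i _ => Finset.sum_congr rfl fun j _ => by ring

lemma pairL_apply {F : Type*} [Field F] {ι₁ ι₂ : Type*} [Fintype ι₁] [Fintype ι₂]
    (x m : ι₂ → ι₁ → F) : pairL F x m = ∑ i, ∑ j, x i j * m i j := rfl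

lemma mem_dualCode2_iff_le_ker {F : Type*} [Field F] {ι₁ ι₂ : Type*} [Fintype ι₁] [Fintype ι₂]
    {C : Submodule F (ι₂ → ι₁ → F)} {x : ι₂ → ι₁ → F} :
    x ∈ dualCode2 F C ↔ C ≤ LinearMap.ker (pairL F x) := by
  constructor
  · intro h c hc
    exact LinearMap.mem_ker.mpr (h c hc)
  · intro h c hc
    exact LinearMap.mem_ker.mp (h hc)

/-- Core MDS-type lemma: a vector on `ℙ¹(F)` of Hamming weight at most `D+1` that is
orthogonal to all the monomial evaluation vectors `vproj F D d`, `d ≤ D`, is zero. -/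
lemma factA {F : Type*} [Field F] [Fintype F] [DecidableEq F] (D : ℕ) (μ : Option F → F)
    (hw : hammingNorm μ ≤ D + 1)
    (h : ∀ d, d ≤ D → ∑ j, μ j * vproj F D d j = 0) : μ = 0 := by
  classical
  set S : Finset F := Finset.univ.filter (fun α => μ (some α) ≠ 0) with hS
  have hScard : S.card ≤ hammingNorm μ := by
    rw [hammingNorm]
    calc S.card = (S.image some).card :=
          (Finset.card_image_of_injective _ (Option.some_injective F)).symm
      _ ≤ _ := by
          apply Finset.card_le_card
          intro j hj
          simp only [Finset.mem_image] at hj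
          obtain ⟨α, hα, rfl⟩ := hj
          simp only [hS, Finset.mem_filter, Finset.mem_univ, true_and] at hα ⊢
          exact hα
  have hScard2 : μ none ≠ 0 → S.card + 1 ≤ hammingNorm μ := by
    intro h0
    rw [hammingNorm]
    have hnotmem : (none : Option F) ∉ S.image some := by simp
    calc S.card + 1 = (insert none (S.image some)).card := by
          rw [Finset.card_insert_of_notMem hnotmem,
            Finset.card_image_of_injective _ (Option.some_injective F)]
      _ ≤ _ := by
          apply Finset.card_le_card
          intro j hj
          rcases Finset.mem_insert.mp hj with rfl | hj
          · simpa using h0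
          · simp only [Finset.mem_image] at hj
            obtain ⟨α, hα, rfl⟩ := hj
            simp only [hS, Finset.mem_filter, Finset.mem_univ, true_and] at hα ⊢
            exact hα
  have expand : ∀ d, (∑ j : Option F, μ j * vproj F D d j)
      = μ none * (if d = D then 1 else 0) + ∑ α : F, μ (some α) * α ^ d := by
    intro d; rw [Fintype.sum_option]; rfl
  have key : ∀ p : Polynomial F, p.natDegree ≤ D →
      (∑ α : F, μ (some α) * p.eval α) + μ none * p.coeff D = 0 := by
    intro p hp
    have h0 : ∑ d ∈ Finset.range (D + 1), p.coeff d * (∑ j, μ j * vproj F D d j) = 0 :=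
      Finset.sum_eq_zero fun d hd => by
        rw [h d (Nat.lt_succ_iff.mp (Finset.mem_range.mp hd)), mul_zero]
    have calc1 : ∑ d ∈ Finset.range (D + 1), p.coeff d * (∑ j, μ j * vproj F D d j)
        = (∑ d ∈ Finset.range (D + 1), p.coeff d * (μ none * (if d = D then 1 else 0)))
          + ∑ d ∈ Finset.range (D + 1), p.coeff d * ∑ α : F, μ (some α) * α ^ d := by
      simp only [expand, mul_add, Finset.sum_add_distrib]
    have calc2 : ∑ d ∈ Finset.range (D + 1), p.coeff d * (μ none * (if d = D then 1 else 0))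
        = μ none * p.coeff D := by
      rw [Finset.sum_eq_single D]
      · simp [mul_comm]
      · intro d _ hne; simp [hne]
      · intro hD; exact absurd (Finset.self_mem_range_succ D) hD
    have calc3 : ∑ d ∈ Finset.range (D + 1), p.coeff d * ∑ α : F, μ (some α) * α ^ d
        = ∑ α : F, μ (some α) * p.eval α := by
      simp_rw [Finset.mul_sum]
      rw [Finset.sum_comm]
      refine Finset.sum_congr rfl fun α _ => ?_
      rw [eval_eq_sum_range' (Nat.lt_succ_of_le hp) α, Finset.mul_sum]
      exact Finset.sum_congr rfl fun d _ => by ring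
    rw [← h0, calc1, calc2, calc3, add_comm]
  have haff : ∀ α0 : F, μ (some α0) = 0 := by
    intro α0
    by_contra hα0
    have hα0S : α0 ∈ S := by
      simp only [hS, Finset.mem_filter, Finset.mem_univ, true_and]; exact hα0
    have hSne : S.Nonempty := ⟨α0, hα0S⟩
    have hSpos : 1 ≤ S.card := Finset.card_pos.mpr hSne
    have hvs : Set.InjOn (id : F → F) S := Set.injOn_id _
    set p := Lagrange.basis S id α0 with hp
    have hdeg : p.natDegree = S.card - 1 := Lagrange.natDegree_basis hvs hα0S
    have hdegD : p.natDegree ≤ D := by omega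
    have hk := key p hdegD
    have hsum : ∑ α : F, μ (some α) * p.eval α = μ (some α0) := by
      rw [← Finset.sum_subset (Finset.subset_univ S) (fun α _ hα => ?_)]
      · rw [Finset.sum_eq_single α0 (fun β hβ hne => ?_) (fun habs => absurd hα0S habs)]
        · rw [show p.eval α0 = p.eval (id α0) from rfl,
            Lagrange.eval_basis_self hvs hα0S, mul_one]
        · rw [show p.eval β = p.eval (id β) from rfl,
            Lagrange.eval_basis_of_ne (Ne.symm hne) hβ, mul_zero]
      · have : ¬μ (some α) ≠ 0 := by
          simpa only [hS, Finset.mem_filter, Finset.mem_univ, true_and] using hα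
        rw [not_not.mp this, zero_mul]
    have hcoeffD : μ none * p.coeff D = 0 := by
      by_cases h0 : μ none = 0
      · rw [h0, zero_mul]
      · have hc2 := hScard2 h0
        have hlt : p.natDegree < D := by omega
        rw [Polynomial.coeff_eq_zero_of_natDegree_lt hlt, mul_zero]
    rw [hsum, hcoeffD, add_zero] at hk
    exact hα0 hk
  have hnone : μ none = 0 := by
    have h2 := h D le_rfl
    rw [expand D] at h2
    simpa [haff] using h2
  funext j
  cases j with
  | none => exact hnone
  | some α => exact haff α

lemma coeff_basis_top {F : Type*} [Field F] [DecidableEq F] {T : Finset F} {a : ℕ}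
    (hT : T.card = a + 1) {β : F} (hβ : β ∈ T) :
    (Lagrange.basis T id β).coeff a = Lagrange.nodalWeight T id β := by
  have h1 : (Lagrange.nodal (T.erase β) (id : F → F)).natDegree = a := by
    rw [Lagrange.natDegree_nodal, Finset.card_erase_of_mem hβ, hT]
    omega
  have h2 : (Lagrange.nodal (T.erase β) (id : F → F)).coeff a = 1 := by
    conv_lhs => rw [← h1]
    exact Lagrange.nodal_monic.coeff_natDegree
  rw [Lagrange.basis_eq_prod_sub_inv_mul_nodal_div hβ,
    ← Lagrange.nodal_erase_eq_nodal_div hβ, Polynomial.coeff_C_mul, h2, mul_one]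

lemma lagrange_coeff_identity {F : Type*} [Field F] [DecidableEq F] {T : Finset F} {a : ℕ}
    (hT : T.card = a + 1) (d : ℕ) (hd : d ≤ a) :
    ∑ β ∈ T, β ^ d * Lagrange.nodalWeight T id β = if d = a then 1 else 0 := by
  have hvs : Set.InjOn (id : F → F) T := Set.injOn_id _
  have hdeg : (X ^ d : F[X]).degree < T.card := by
    rw [Polynomial.degree_X_pow, hT]
    exact_mod_cast Nat.lt_succ_of_le hd
  have hinterp := Lagrange.eq_interpolate hvs hdeg
  have hc := congrArg (fun p : F[X] => p.coeff a) hinterp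
  simp only [Lagrange.interpolate_apply, Polynomial.finset_sum_coeff,
    Polynomial.coeff_X_pow] at hc
  have heq : (if a = d then (1 : F) else 0) = if d = a then 1 else 0 := by
    by_cases hda : d = a <;> simp [hda, Ne.symm, eq_comm]
  rw [← heq, hc]
  refine Finset.sum_congr rfl fun β hβ => ?_
  rw [Polynomial.coeff_C_mul, coeff_basis_top hT hβ]
  simp

lemma vproj_mem_PRS {F : Type*} [Field F] (D i : ℕ) (hi : i ≤ D) :
    vproj F D i ∈ PRS F ((D : ℤ) + 1) := by
  rw [PRS, if_neg (show ¬((D : ℤ) + 1 ≤ 0) by omega)]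
  refine ⟨MvPolynomial.X 0 ^ (D - i) * MvPolynomial.X 1 ^ i, ?_, ?_⟩
  · rw [SetLike.mem_coe, MvPolynomial.mem_homogeneousSubmodule]
    have he : ((D : ℤ) + 1 - 1).toNat = D := by omega
    rw [he]
    have := (MvPolynomial.isHomogeneous_X_pow (R := F) (0 : Fin 2) (D - i)).mul
      (MvPolynomial.isHomogeneous_X_pow (R := F) (1 : Fin 2) i)
    rwa [Nat.sub_add_cancel hi] at this
  · funext p
    simp only [LinearMap.pi_apply, AlgHom.toLinearMap_apply, map_mul, map_pow,
      MvPolynomial.aeval_X]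
    cases p with
    | none =>
      show ((![(0 : F), 1]) 0) ^ (D - i) * ((![(0 : F), 1]) 1) ^ i
        = (if i = D then (1 : F) else 0)
      simp only [Matrix.cons_val_zero, Matrix.cons_val_one, Matrix.head_cons, one_pow, mul_one]
      by_cases hc : i = D
      · subst hc; simp
      · rw [if_neg hc, zero_pow (show D - i ≠ 0 by omega)]
    | some α =>
      show ((![(1 : F), α]) 0) ^ (D - i) * ((![(1 : F), α]) 1) ^ i = α ^ i
      simp

lemma normcol_le_wt2 {F : Type*} [Zero F] [DecidableEq F] {ι₁ ι₂ : Type*} [Fintype ι₁]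
    [Fintype ι₂] [DecidableEq ι₁] [DecidableEq ι₂] (m : ι₂ → ι₁ → F) (j : ι₁) :
    hammingNorm (fun i => m i j) ≤ wt2 m := by
  rw [wt2, hammingNorm, hammingNorm]
  apply Finset.card_le_card_of_injOn (fun i => ((i, j) : ι₂ × ι₁))
  · intro i hi
    simp only [Finset.mem_coe, Finset.mem_filter, Finset.mem_univ, true_and] at hi ⊢
    exact hi
  · intro i1 _ i2 _ hh
    simpa using congrArg Prod.fst hh

lemma norm_le_wt2 {F : Type*} [Zero F] [DecidableEq F] {ι₁ ι₂ : Type*} [Fintype ι₁]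
    [Fintype ι₂] [DecidableEq ι₁] [DecidableEq ι₂] [Nonempty ι₂] (m : ι₂ → ι₁ → F)
    (w : ι₁ → F) (h : ∀ j, w j ≠ 0 → ∃ i, m i j ≠ 0) : hammingNorm w ≤ wt2 m := by
  rw [wt2, hammingNorm, hammingNorm]
  apply Finset.card_le_card_of_injOn
    (fun j => (((if hj : w j ≠ 0 then Classical.choose (h j hj) else Classical.arbitrary ι₂),
      j) : ι₂ × ι₁))
  · intro j hj
    simp only [Finset.mem_coe, Finset.mem_filter, Finset.mem_univ, true_and] at hj ⊢
    rw [dif_pos hj]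
    exact Classical.choose_spec (h j hj)
  · intro j1 _ j2 _ hh
    simpa using congrArg Prod.snd hh

/-- for `e ≥ 2`, `1 ≤ a ≤ q-1` and `0 ≤ b - ea ≤ q-1`, the minimum distance
`d^⊥` of `C_e(a,b)^⊥` satisfies `min{a, b-ea} + 2 ≤ d^⊥ ≤ min{a, b} + 2`. -/
theorem CE_dual_minDist (F : Type*) [Field F] [Fintype F] [DecidableEq F] (q e a b : ℕ)
    (hq : Fintype.card F = q) (he : 2 ≤ e) (ha1 : 1 ≤ a) (ha2 : a ≤ q - 1)
    (hb1 : e * a ≤ b) (hb2 : b - e * a ≤ q - 1) :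
    min a (b - e * a) + 2 ≤ minDist2 F (dualCode2 F (CE F e a b)) ∧
      minDist2 F (dualCode2 F (CE F e a b)) ≤ min a b + 2 := by
  classical
  have hq1 : 1 ≤ q := by
    have := Fintype.card_pos (α := F); omega
  have haq : a + 1 ≤ q := by omega
  have hea : a ≤ e * a := Nat.le_mul_of_pos_left a (by omega)
  have hab : a ≤ b := le_trans hea hb1
  have hminab : min a b = a := min_eq_left hab
  obtain ⟨T, -, hTcard⟩ := Finset.exists_subset_card_eq
    (show a + 1 ≤ (Finset.univ : Finset F).card by rw [Finset.card_univ, hq]; exact haq)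
  set x : Option F → Option F → F := fun i j =>
    Option.elim j (Option.elim i (-1 : F) fun β =>
      if β ∈ T then Lagrange.nodalWeight T id β else 0) (fun _ => 0) with hx
  have hxsome : ∀ i α, x i (some α) = 0 := fun i α => rfl
  have hxnone_none : x none none = -1 := rfl
  have hxnone_some : ∀ β, x (some β) none =
      if β ∈ T then Lagrange.nodalWeight T id β else 0 := fun β => rfl
  have hvnone : ∀ d, vproj F a d none = if d = a then (1 : F) else 0 := fun d => rfl
  have hkey : ∀ d, d ≤ a → ∑ i, x i none * vproj F a d i = 0 := by
    intro d hd
    rw [Fintype.sum_option]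
    have h1 : ∑ β : F, x (some β) none * vproj F a d (some β)
        = ∑ β ∈ T, Lagrange.nodalWeight T id β * β ^ d := by
      rw [← Finset.sum_subset (Finset.subset_univ T)
        (fun β _ hβ => by rw [hxnone_some, if_neg hβ, zero_mul])]
      refine Finset.sum_congr rfl fun β hβ => ?_
      rw [hxnone_some, if_pos hβ]
      rfl
    have h2 : ∑ β ∈ T, Lagrange.nodalWeight T id β * β ^ d = if d = a then 1 else 0 := by
      rw [← lagrange_coeff_identity hTcard d hd]
      exact Finset.sum_congr rfl fun β _ => mul_comm _ _
    rw [h1, h2, hxnone_none, hvnone]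
    by_cases hda : d = a <;> simp [hda]
  have hxdual : x ∈ dualCode2 F (CE F e a b) := by
    rw [mem_dualCode2_iff_le_ker, CE]
    refine iSup_le fun d => iSup_le fun hd => Submodule.map_le_iff_le_comap.mpr fun c hc => ?_
    simp only [Submodule.mem_comap, LinearMap.mem_ker, pairL_apply]
    calc ∑ i, ∑ j, x i j * vTensor F (vproj F a d) c i j
        = ∑ i : Option F, x i none * (vproj F a d i * c none) := by
          refine Finset.sum_congr rfl fun i _ => ?_
          rw [Fintype.sum_option]
          have hz : ∀ α : F, x i (some α) * vTensor F (vproj F a d) c i (some α) = 0 :=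
            fun α => by rw [hxsome, zero_mul]
          simp only [hz, Finset.sum_const_zero, add_zero]
          rfl
      _ = (∑ i, x i none * vproj F a d i) * c none := by
          rw [Finset.sum_mul]
          exact Finset.sum_congr rfl fun i _ => by ring
      _ = 0 := by rw [hkey d (Finset.mem_Iic.mp hd), zero_mul]
  have hxne : x ≠ 0 := by
    intro h0
    have h1 := congrFun (congrFun h0 none) none
    rw [hxnone_none] at h1
    exact (neg_ne_zero.mpr (one_ne_zero : (1 : F) ≠ 0)) h1
  have hxwt : wt2 x ≤ a + 2 := by
    rw [wt2, hammingNorm]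
    calc (Finset.univ.filter fun p : Option F × Option F => x p.1 p.2 ≠ 0).card
        ≤ ((insert none (T.image some)) ×ˢ ({none} : Finset (Option F))).card := by
          apply Finset.card_le_card
          intro p hp
          simp only [Finset.mem_filter, Finset.mem_univ, true_and] at hp
          rcases p with ⟨i, j⟩
          cases j with
          | some α => exact absurd (hxsome i α) hp
          | none =>
            rw [Finset.mem_product]
            refine ⟨?_, by simp⟩
            cases i with
            | none => exact Finset.mem_insert_self _ _
            | some β =>
              refine Finset.mem_insert_of_mem (Finset.mem_image_of_mem some ?_)
              by_contra hβ
              rw [hxnone_some, if_neg hβ] at hp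
              exact hp rfl
      _ ≤ a + 2 := by
          rw [Finset.card_product, Finset.card_singleton, mul_one]
          calc (insert none (T.image some)).card ≤ (T.image some).card + 1 :=
                Finset.card_insert_le _ _
            _ ≤ a + 2 := by
                rw [Finset.card_image_of_injective _ (Option.some_injective F), hTcard]
  have hxmem : wt2 x ∈ {w | ∃ m ∈ dualCode2 F (CE F e a b), m ≠ 0 ∧ wt2 m = w} :=
    ⟨x, hxdual, hxne, rfl⟩
  have core : ∀ m ∈ dualCode2 F (CE F e a b), wt2 m ≤ min a (b - e * a) + 1 → m = 0 := by
    intro m hm hwt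
    have hgen : ∀ d, d ≤ a → ∀ c ∈ PRS F ((b : ℤ) - e * d + 1),
        ∑ j, (∑ i, m i j * vproj F a d i) * c j = 0 := by
      intro d hd c hc
      have hmem : vTensor F (vproj F a d) c ∈ CE F e a b := by
        have hle : (PRS F ((b : ℤ) - e * d + 1)).map (vTensor F (vproj F a d))
            ≤ CE F e a b := le_iSup₂ (f := fun d (_ : d ∈ Finset.Iic a) =>
              (PRS F ((b : ℤ) - e * d + 1)).map (vTensor F (vproj F a d))) d
              (Finset.mem_Iic.mpr hd)
        exact hle (Submodule.mem_map_of_mem hc)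
      have h0 := mem_dualCode2.mp hm _ hmem
      calc ∑ j, (∑ i, m i j * vproj F a d i) * c j
          = ∑ j, ∑ i, m i j * (vproj F a d i * c j) := by
            refine Finset.sum_congr rfl fun j _ => ?_
            rw [Finset.sum_mul]
            exact Finset.sum_congr rfl fun i _ => by ring
        _ = ∑ i, ∑ j, m i j * (vproj F a d i * c j) := Finset.sum_comm
        _ = 0 := h0
    have hwd : ∀ d, d ≤ a → ∀ j, (∑ i, m i j * vproj F a d i) = 0 := by
      intro d hd
      have hD : e * d ≤ b := le_trans (Nat.mul_le_mul_left e hd) hb1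
      have hμ0 : (fun j => ∑ i, m i j * vproj F a d i) = 0 := by
        apply factA (b - e * d)
        · have h1 : hammingNorm (fun j => ∑ i, m i j * vproj F a d i) ≤ wt2 m := by
            apply norm_le_wt2
            intro j hj
            by_contra hno
            push_neg at hno
            exact hj (Finset.sum_eq_zero fun i _ => by rw [hno i, zero_mul])
          have h2 : b - e * a ≤ b - e * d := Nat.sub_le_sub_left (Nat.mul_le_mul_left e hd) b
          have h3 : min a (b - e * a) ≤ b - e * a := min_le_right _ _
          omega
        · intro i hi
          have hcast : ((b : ℤ) - e * d + 1) = ((b - e * d : ℕ) : ℤ) + 1 := by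
            rw [Nat.cast_sub hD]; push_cast; ring
          have hmem2 : vproj F (b - e * d) i ∈ PRS F ((b : ℤ) - e * d + 1) := by
            rw [hcast]; exact vproj_mem_PRS (b - e * d) i hi
          exact hgen d hd _ hmem2
      intro j
      exact congrFun hμ0 j
    have hcol : ∀ j, (fun i => m i j) = (0 : Option F → F) := by
      intro j
      apply factA a
      · have h1 := normcol_le_wt2 m j
        have h3 : min a (b - e * a) ≤ a := min_le_left _ _
        omega
      · intro d hd
        exact hwd d hd j
    funext i j
    exact congrFun (hcol j) i
  constructor
  · rw [minDist2]
    apply le_csInf ⟨wt2 x, hxmem⟩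
    rintro w ⟨m, hm, hmne, rfl⟩
    by_contra hcon
    push_neg at hcon
    exact hmne (core m hm (by omega))
  · rw [minDist2]
    calc sInf {w | ∃ m ∈ dualCode2 F (CE F e a b), m ≠ 0 ∧ wt2 m = w} ≤ wt2 x :=
          Nat.sInf_le hxmem
      _ ≤ a + 2 := hxwt
      _ = min a b + 2 := by rw [hminab]
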